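/- Let u and v be finite Lyndon words with u <lex v. Then v can be factorized as v = uⁿxy for some n ≥ 0 and finite words x, y such that |x| ≤ |u| and u <lex x with x not a prefix of u (i.e., u and x differ at some position in their common domain where the letter of u is smaller). -/
import Mathlib


/-- A finite word is a Lyndon word if it is nonempty and lexicographically
strictly smaller than all of its proper nonempty suffixes. -/
def IsLyndon {A : Type*} [LinearOrder A] (w : List A) : Prop :=
  w ≠ [] ∧ ∀ i : ℕ, 0 < i → i < w.length → w < w.drop i


/-- `u ◁ x`: `u` and `x` agree on a common prefix and then `u` has a strictly
smaller letter than `x`. -/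
def LtStr {A : Type*} [LinearOrder A] (u x : List A) : Prop :=
  ∃ (y z z' : List A) (a b : A), a < b ∧ u = y ++ a :: z ∧ x = y ++ b :: z'

section Aux

variable {A : Type*} [LinearOrder A]

lemma list_lt_iff_lex (l l' : List A) : l < l' ↔ List.Lex (· < ·) l l' := Iff.rfl

lemma not_lex_append : ∀ (l t : List A), ¬ List.Lex (· < ·) (l ++ t) l
  | [], t, h => by cases h
  | a :: l, t, h => by
      cases h with
      | cons h => exact not_lex_append l t h
      | rel h => exact lt_irrefl _ h

lemma prefix_le {l l' : List A} (h : l <+: l') : l ≤ l' := by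
  obtain ⟨t, rfl⟩ := h
  exact not_lt.mp (not_lex_append l t)

lemma lex_diff : ∀ {l w : List A}, List.Lex (· < ·) l w → ¬ l <+: w →
    ∃ (y z z' : List A) (a b : A), a < b ∧ l = y ++ a :: z ∧ w = y ++ b :: z'
  | _, _, List.Lex.nil, hp => absurd List.nil_prefix hp
  | _, _, @List.Lex.cons _ _ c l₁ l₂ h, hp => by
      obtain ⟨y, z, z', a, b, hab, h1, h2⟩ :=
        lex_diff h (fun hpp => hp (by obtain ⟨t, rfl⟩ := hpp; exact ⟨t, rfl⟩))
      exact ⟨c :: y, z, z', a, b, hab, by simp [h1], by simp [h2]⟩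
  | _, _, @List.Lex.rel _ _ a l₁ b l₂ h, _ =>
      ⟨[], l₁, l₂, a, b, h, rfl, rfl⟩

end Aux

theorem lyndon_factorize_pow_prefix {A : Type*} [LinearOrder A] (u v : List A)
    (hu : IsLyndon u) (hv : IsLyndon v) (huv : u < v) :
    ∃ (n : ℕ) (x y : List A),
      v = (List.replicate n u).flatten ++ x ++ y ∧ x.length ≤ u.length ∧ LtStr u x := by
  classical
  obtain ⟨hune, hulyn⟩ := hu
  have hupos : 0 < u.length := List.length_pos_iff.mpr hune
  set P : ℕ → Prop := fun n => (List.replicate n u).flatten <+: v with hP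
  have hP0 : P 0 := by simp [hP]
  have hlenP : ∀ n, P n → n * u.length ≤ v.length := by
    intro n hn
    have := hn.length_le
    simpa using this
  set k := Nat.findGreatest P v.length with hk
  have hPk : P k := Nat.findGreatest_spec (Nat.zero_le _) hP0
  have hnotPk1 : ¬ P (k + 1) := by
    intro h
    have hle : k + 1 ≤ v.length := le_trans (by nlinarith [hlenP (k+1) h]) (hlenP (k+1) h)
    exact Nat.findGreatest_is_greatest (Nat.lt_succ_self k) hle h
  -- w : the remainder
  set w := v.drop ((List.replicate k u).flatten.length) with hw
  have hvw : v = (List.replicate k u).flatten ++ w := by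
    obtain ⟨t, ht⟩ := hPk
    rw [hw, ← ht]
    simp
  have hklen : (List.replicate k u).flatten.length = k * u.length := by simp [mul_comm]
  -- u is not a prefix of w
  have hnotpre : ¬ u <+: w := by
    intro ⟨t, ht⟩
    apply hnotPk1
    refine ⟨t, ?_⟩
    rw [List.replicate_succ', List.flatten_append, hvw, ← ht]
    simp
  -- w is nonempty
  have hwne : w ≠ [] := by
    intro hnil
    rw [hnil, List.append_nil] at hvw
    rcases Nat.lt_or_ge k 2 with hk2 | hk2
    · interval_cases k
      · exact hv.1 (by simpa using hvw)
      · simp at hvw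
        rw [hvw] at huv
        exact lt_irrefl _ huv
    · -- k ≥ 2 : v = u^k, contradiction with Lyndon
      have hlen : v.length = k * u.length := by rw [hvw, hklen]
      have h1 : 0 < u.length := hupos
      have h2 : u.length < v.length := by
        rw [hlen]; nlinarith
      have hdrop : v.drop u.length = (List.replicate (k-1) u).flatten := by
        rw [hvw]
        have : k = 1 + (k - 1) := by omega
        rw [this, List.replicate_add, List.flatten_append]
        simp
      have hpre : (List.replicate (k-1) u).flatten <+: v := by
        rw [hvw]
        refine ⟨u, ?_⟩
        have : k = (k - 1) + 1 := by omega
        rw [this, List.replicate_succ', List.flatten_append]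
        simp
      have := hv.2 u.length h1 h2
      rw [hdrop] at this
      exact absurd (prefix_le hpre) (not_le.mpr this)
  -- u < w
  have huw : u < w := by
    rcases Nat.eq_zero_or_pos k with hk0 | hkpos
    · have hwv : w = v := by rw [hw, hk0]; simp
      rwa [hwv]
    · have h1 : 0 < k * u.length := by positivity
      have h2 : k * u.length < v.length := by
        have := congrArg List.length hvw
        simp only [List.length_append, hklen] at this
        have hw0 : 0 < w.length := List.length_pos_iff.mpr hwne
        omega
      have hvltw : v < w := by
        have := hv.2 (k * u.length) h1 h2
        rwa [hw, hklen]
      have : u ≤ v := le_of_lt huv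
      exact lt_of_le_of_lt this hvltw
  -- extract the difference
  obtain ⟨y, z, z', a, b, hab, h1, h2⟩ := lex_diff ((list_lt_iff_lex u w).mp huw) hnotpre
  have hylt : y.length < u.length := by
    rw [h1]; simp
  refine ⟨k, w.take u.length, w.drop u.length, ?_, List.length_take_le _ _, ?_⟩
  · rw [List.append_assoc, List.take_append_drop, ← hvw]
  · refine ⟨y, z, List.take (u.length - y.length - 1) z', a, b, hab, h1, ?_⟩
    rw [h2, List.take_append]
    have : u.length - y.length = (u.length - y.length - 1) + 1 := by omega
    rw [List.take_of_length_le (by omega), this, List.take_cons (by omega)]
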